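/- Let ε ∈ (0,1) and let A ∈ {−1,0,1}^{n×n} be positive semidefinite. Let G be a simple graph on vertex set [n] such that any two disjoint subsets of vertices, each of size at least (ε/6)n, are joined by at least one edge. Let Ḡ be the simple graph on [n] with an edge {i,j} if and only if {i,j} is an edge of G and |A_{ij}| = 1. For each connected component C of Ḡ with |C| > εn/2, choose any vertex j_C ∈ C, and define Ã = Σ_{C : |C| > εn/2} A_{j_C}·A_{j_C}ᵀ, where A_j ∈ ℝⁿ denotes the j-th column of A. Then Ã is positive semidefinite with entries in {−1,0,1} and ‖A − Ã‖₂ ≤ εn. -/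

import Mathlib

open Matrix BigOperators

/-- The spectral (operator) norm of a real square matrix. -/
noncomputable def specNorm {m : ℕ} (M : Matrix (Fin m) (Fin m) ℝ) : ℝ :=
  ‖LinearMap.toContinuousLinearMap (Matrix.toEuclideanLin M)‖

/-- The `n × n` all-ones matrix. -/
def allOnes (m : ℕ) : Matrix (Fin m) (Fin m) ℝ := Matrix.of fun _ _ => 1

/-- Euclidean norm of a vector in `ℝⁿ`. -/
noncomputable def vnorm {m : ℕ} (x : Fin m → ℝ) : ℝ := Real.sqrt (∑ i, (x i) ^ 2)

/-- The (unsorted) singular values of a real square matrix: square roots of the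
eigenvalues of `Aᵀ A`. -/
noncomputable def svRaw {m : ℕ} (A : Matrix (Fin m) (Fin m) ℝ) : Fin m → ℝ :=
  fun j => Real.sqrt ((show (Aᵀ * A).IsHermitian by simpa using Matrix.isHermitian_conjTranspose_mul_self A).eigenvalues j)

/-- `sval A i` is the `i`-th largest singular value of `A` (1-based indexing);
it is `0` for `i = 0` and for `i > m`. -/
noncomputable def sval {m : ℕ} (A : Matrix (Fin m) (Fin m) ℝ) (i : ℕ) : ℝ :=
  if h : 1 ≤ i ∧ i ≤ m then (svRaw A ∘ Tuple.sort (svRaw A)) ⟨m - i, by omega⟩ else 0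

/-- The nuclear (Schatten-1) norm of a real square matrix: the sum of its singular values. -/
noncomputable def nuclearNorm {m : ℕ} (A : Matrix (Fin m) (Fin m) ℝ) : ℝ :=
  ∑ j, svRaw A j

/-- The smallest eigenvalue of a symmetric real matrix, via the Rayleigh quotient. -/
noncomputable def lamMin {m : ℕ} (A : Matrix (Fin m) (Fin m) ℝ) : ℝ :=
  sInf {r : ℝ | ∃ x : Fin m → ℝ, vnorm x = 1 ∧ r = x ⬝ᵥ (A *ᵥ x)}

/-- The approximation built from one column of `A` per large connected component:
`Ã = Σ_{j ∈ J} A_j A_jᵀ`, where `A_j` is the `j`-th column of `A`. -/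
noncomputable def compApprox {n : ℕ} (A : Matrix (Fin n) (Fin n) ℝ)
    (J : Finset (Fin n)) : Matrix (Fin n) (Fin n) ℝ :=
  ∑ j ∈ J, Matrix.vecMulVec (fun i => A i j) (fun i => A i j)

lemma specNorm_le_of_rows {m : ℕ} (M : Matrix (Fin m) (Fin m) ℝ) (c : ℝ) (hc : 0 ≤ c)
    (hent : ∀ i k, M i k = -1 ∨ M i k = 0 ∨ M i k = 1)
    (hsym : ∀ i k, M i k = M k i)
    (hrow : ∀ i, (∑ k, (M i k)^2) ≤ c) :
    specNorm M ≤ c := by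
  have key : ∀ x : Fin m → ℝ, ∑ i, ((M *ᵥ x) i)^2 ≤ c^2 * ∑ i, (x i)^2 := by
    intro x
    have hcol : ∀ k, (∑ i, (M i k)^2) ≤ c := by
      intro k
      have : ∀ i, (M i k)^2 = (M k i)^2 := fun i => by rw [hsym i k]
      simp only [this]
      exact hrow k
    have h1 : ∀ i, ((M *ᵥ x) i)^2 ≤ c * ∑ k, (M i k)^2 * (x k)^2 := by
      intro i
      have hMv : (M *ᵥ x) i = ∑ k, (M i k)^2 * (M i k * x k) := by
        simp only [Matrix.mulVec, dotProduct]
        refine Finset.sum_congr rfl fun k _ => ?_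
        rcases hent i k with h|h|h <;> rw [h] <;> ring
      rw [hMv]
      calc (∑ k, (M i k)^2 * (M i k * x k))^2
          ≤ (∑ k, ((M i k)^2)^2) * ∑ k, (M i k * x k)^2 :=
            Finset.sum_mul_sq_le_sq_mul_sq _ _ _
        _ = (∑ k, (M i k)^2) * ∑ k, (M i k)^2 * (x k)^2 := by
            congr 1
            · refine Finset.sum_congr rfl fun k _ => ?_
              rcases hent i k with h|h|h <;> rw [h] <;> ring
            · exact Finset.sum_congr rfl fun k _ => by ring
        _ ≤ c * ∑ k, (M i k)^2 * (x k)^2 := by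
            refine mul_le_mul_of_nonneg_right (hrow i) ?_
            exact Finset.sum_nonneg fun k _ => mul_nonneg (sq_nonneg _) (sq_nonneg _)
    calc ∑ i, ((M *ᵥ x) i)^2
        ≤ ∑ i, c * ∑ k, (M i k)^2 * (x k)^2 := Finset.sum_le_sum (fun i _ => h1 i)
      _ = c * ∑ k, (∑ i, (M i k)^2) * (x k)^2 := by
          rw [← Finset.mul_sum]
          congr 1
          rw [Finset.sum_comm]
          exact Finset.sum_congr rfl fun k _ => (Finset.sum_mul _ _ _).symm
      _ ≤ c * ∑ k, c * (x k)^2 := by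
          refine mul_le_mul_of_nonneg_left (Finset.sum_le_sum fun k _ => ?_) hc
          exact mul_le_mul_of_nonneg_right (hcol k) (sq_nonneg _)
      _ = c^2 * ∑ k, (x k)^2 := by rw [← Finset.mul_sum]; ring
  unfold specNorm
  apply ContinuousLinearMap.opNorm_le_bound _ hc
  intro x
  rw [LinearMap.coe_toContinuousLinearMap']
  rw [Matrix.toEuclideanLin_apply]
  rw [EuclideanSpace.norm_eq, EuclideanSpace.norm_eq]
  set y : Fin m → ℝ := x.ofLp with hy
  simp only [Real.norm_eq_abs, sq_abs]
  have := key y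
  calc Real.sqrt (∑ i, ((M *ᵥ y) i)^2) ≤ Real.sqrt (c^2 * ∑ i, (y i)^2) :=
        Real.sqrt_le_sqrt this
    _ = c * Real.sqrt (∑ i, (y i)^2) := by
        rw [Real.sqrt_mul (sq_nonneg c), Real.sqrt_sq hc]

lemma split_bound {n : ℕ} (G Gbar : SimpleGraph (Fin n)) (b : ℝ) (hb : 0 < b)
    (hexp : ∀ X Y : Finset (Fin n), Disjoint X Y → b ≤ X.card → b ≤ Y.card →
      ∃ x ∈ (X : Set (Fin n)), ∃ y ∈ (Y : Set (Fin n)), G.Adj x y)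
    (K : Finset (Fin n))
    (hadj : ∀ x ∈ K, ∀ y ∈ K, G.Adj x y → Gbar.Adj x y)
    (hcomp : ∀ x ∈ K, ((Gbar.connectedComponentMk x).supp.ncard : ℝ) ≤ 3 * b) :
    (K.card : ℝ) ≤ 6 * b := by
  classical
  by_contra hK
  push_neg at hK
  set P : ℕ → Prop := fun c => ∃ X : Finset (Fin n), X ⊆ K ∧
    (∀ x ∈ X, ∀ k ∈ K, Gbar.connectedComponentMk k = Gbar.connectedComponentMk x → k ∈ X) ∧
    b ≤ (X.card : ℝ) ∧ X.card = c with hP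
  have hPK : ∃ c, P c := ⟨K.card, K, Finset.Subset.refl K, fun _ _ k hk _ => hk,
    by linarith, rfl⟩
  obtain ⟨X, hXK, hXcl, hXb, hXc⟩ := Nat.find_spec hPK
  have hXpos : 0 < X.card := by
    have : (0:ℝ) < X.card := lt_of_lt_of_le hb hXb
    exact_mod_cast this
  obtain ⟨i₀, hi₀⟩ := Finset.card_pos.mp hXpos
  set P0 : Finset (Fin n) :=
    X.filter (fun k => Gbar.connectedComponentMk k = Gbar.connectedComponentMk i₀) with hP0
  have hi₀P0 : i₀ ∈ P0 := Finset.mem_filter.mpr ⟨hi₀, rfl⟩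
  set X' : Finset (Fin n) := X \ P0 with hX'
  have hX'K : X' ⊆ K := fun x hx => hXK (Finset.mem_sdiff.mp hx).1
  have hX'cl : ∀ x ∈ X', ∀ k ∈ K,
      Gbar.connectedComponentMk k = Gbar.connectedComponentMk x → k ∈ X' := by
    intro x hx k hk hck
    rw [Finset.mem_sdiff] at hx ⊢
    refine ⟨hXcl x hx.1 k hk hck, ?_⟩
    intro hkP0
    apply hx.2
    rw [hP0, Finset.mem_filter] at hkP0 ⊢
    exact ⟨hx.1, hck ▸ hkP0.2⟩
  have hX'lt : X'.card < X.card :=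
    Finset.card_lt_card (Finset.sdiff_ssubset (Finset.filter_subset _ _) ⟨i₀, hi₀P0⟩)
  -- minimality gives X'.card < b
  have hX'b : (X'.card : ℝ) < b := by
    by_contra hge
    push_neg at hge
    have : P X'.card := ⟨X', hX'K, hX'cl, hge, rfl⟩
    have hle := Nat.find_le (h := hPK) this
    omega
  -- P0 is small
  have hP0b : (P0.card : ℝ) ≤ 3 * b := by
    have hsub : (P0 : Set (Fin n)) ⊆ (Gbar.connectedComponentMk i₀).supp := by
      intro k hk
      rw [SimpleGraph.ConnectedComponent.mem_supp_iff]
      exact (Finset.mem_filter.mp hk).2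
    have := Set.ncard_le_ncard hsub (Set.toFinite _)
    rw [Set.ncard_coe_finset] at this
    calc (P0.card : ℝ) ≤ ((Gbar.connectedComponentMk i₀).supp.ncard : ℝ) := by exact_mod_cast this
      _ ≤ 3 * b := hcomp i₀ (hXK hi₀)
  have hXcard : (X.card : ℝ) < 4 * b := by
    have : X'.card + P0.card = X.card :=
      Finset.card_sdiff_add_card_eq_card (Finset.filter_subset _ _)
    have : (X'.card : ℝ) + P0.card = X.card := by exact_mod_cast this
    linarith
  set Y : Finset (Fin n) := K \ X with hY
  have hYcard : (Y.card : ℝ) = (K.card : ℝ) - X.card := by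
    have h1 : Y.card = K.card - X.card := Finset.card_sdiff_of_subset hXK
    have h2 : X.card ≤ K.card := Finset.card_le_card hXK
    rw [h1, Nat.cast_sub h2]
  have hYb : b ≤ (Y.card : ℝ) := by rw [hYcard]; linarith
  have hdisj : Disjoint X Y := by
    rw [hY]
    exact Finset.disjoint_sdiff
  obtain ⟨x, hx, y, hy, hGxy⟩ := hexp X Y hdisj hXb hYb
  have hxX : x ∈ X := hx
  have hyY : y ∈ Y := hy
  have hyK : y ∈ K := (Finset.mem_sdiff.mp hyY).1
  have hGbxy : Gbar.Adj x y := hadj x (hXK hxX) y hyK hGxy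
  have hcyx : Gbar.connectedComponentMk y = Gbar.connectedComponentMk x :=
    SimpleGraph.ConnectedComponent.sound hGbxy.symm.reachable
  exact (Finset.mem_sdiff.mp hyY).2 (hXcl x hxX y hyK hcyx)

lemma walk_rel {n : ℕ} {Gbar : SimpleGraph (Fin n)} {A : Matrix (Fin n) (Fin n) ℝ}
    (hadj_ne : ∀ x y, Gbar.Adj x y → A x y ≠ 0)
    (hmul : ∀ i j k, A i j ≠ 0 → A i k = A i j * A j k) :
    ∀ i j : Fin n, Gbar.Walk i j → i = j ∨ A i j ≠ 0 := by
  intro i j p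
  induction p with
  | nil => exact Or.inl rfl
  | @cons a b c h q ih =>
    have hab : A a b ≠ 0 := hadj_ne a b h
    rcases ih with rfl | hbc
    · exact Or.inr hab
    · right
      rw [hmul a b c hab]
      exact mul_ne_zero hab hbc


/-- **Deterministic spectral approximation of PSD matrices with entries in {−1,0,1}.**
With `G` an `(ε/6)n`-expanding graph, `Ḡ` the graph of edges of `G` where `|A_{ij}|=1`,
and `J` a set containing exactly one vertex from each connected component of `Ḡ` of size
greater than `εn/2`, the matrix `Ã = Σ_{j ∈ J} A_j A_jᵀ` is PSD, has entries in
{−1,0,1}, and satisfies `‖A − Ã‖₂ ≤ εn`. -/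
theorem binary_psd_spectral_approximation
    (n : ℕ) (ε : ℝ) (hε : ε ∈ Set.Ioo (0 : ℝ) 1)
    (A : Matrix (Fin n) (Fin n) ℝ) (hA : A.PosSemidef)
    (hent : ∀ i j, A i j = -1 ∨ A i j = 0 ∨ A i j = 1)
    (G Gbar : SimpleGraph (Fin n))
    (hexp : ∀ X Y : Set (Fin n), Disjoint X Y →
      ε / 6 * n ≤ X.ncard → ε / 6 * n ≤ Y.ncard → ∃ x ∈ X, ∃ y ∈ Y, G.Adj x y)
    (hGbar : ∀ i j, Gbar.Adj i j ↔ G.Adj i j ∧ |A i j| = 1)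
    (J : Finset (Fin n))
    (hJmem : ∀ j ∈ J, ε * n / 2 < ((Gbar.connectedComponentMk j).supp.ncard : ℝ))
    (hJrep : ∀ c : Gbar.ConnectedComponent, ε * n / 2 < (c.supp.ncard : ℝ) →
      ∃! j, j ∈ J ∧ Gbar.connectedComponentMk j = c) :
    (compApprox A J).PosSemidef ∧
    (∀ a b, compApprox A J a b = -1 ∨ compApprox A J a b = 0 ∨ compApprox A J a b = 1) ∧
    specNorm (A - compApprox A J) ≤ ε * n := by
  obtain ⟨hε0, hε1⟩ := hε
  classical
  obtain ⟨B, hB⟩ := by open MatrixOrder in exact CStarAlgebra.nonneg_iff_eq_star_mul_self.mp hA.nonneg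
  have hd : ∀ i j, A i j = ∑ k, B k i * B k j := by
    intro i j; rw [hB]; simp [Matrix.mul_apply, Matrix.conjTranspose_apply]
  have hsymA : ∀ i j, A i j = A j i := by
    intro i j; rw [hd, hd]; exact Finset.sum_congr rfl fun k _ => mul_comm _ _
  have hdiag0 : ∀ i, 0 ≤ A i i := fun i => by
    rw [hd]; exact Finset.sum_nonneg fun k _ => mul_self_nonneg _
  have hdiag01 : ∀ i, A i i = 0 ∨ A i i = 1 := by
    intro i; rcases hent i i with h|h|h
    · exfalso; linarith [hdiag0 i]
    · exact Or.inl h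
    · exact Or.inr h
  have hcs : ∀ i j, A i j ≠ 0 → A i i = 1 ∧ A j j = 1 ∧ ∀ k, B k i = A i j * B k j := by
    intro i j hne
    have h1 : A i j = -1 ∨ A i j = 1 := by
      rcases hent i j with h|h|h
      exacts [Or.inl h, absurd h hne, Or.inr h]
    have hsq : A i j ^ 2 = 1 := by rcases h1 with h|h <;> rw [h] <;> norm_num
    have hCS : (A i j)^2 ≤ A i i * A j j := by
      rw [hd i j, hd i i, hd j j]
      calc (∑ k, B k i * B k j)^2
          ≤ (∑ k, (B k i)^2) * ∑ k, (B k j)^2 :=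
            Finset.sum_mul_sq_le_sq_mul_sq _ _ _
        _ = (∑ k, B k i * B k i) * ∑ k, B k j * B k j := by simp [sq]
    have hii : A i i = 1 := by
      rcases hdiag01 i with h|h
      · exfalso; rcases hdiag01 j with h'|h' <;> rw [h, h'] at hCS <;> nlinarith
      · exact h
    have hjj : A j j = 1 := by
      rcases hdiag01 j with h|h
      · exfalso; rw [h, hii] at hCS; nlinarith
      · exact h
    refine ⟨hii, hjj, ?_⟩
    have hzero : ∑ k, (B k i - A i j * B k j)^2 = 0 := by
      have expand : ∑ k, (B k i - A i j * B k j)^2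
          = (∑ k, B k i * B k i) - 2 * A i j * (∑ k, B k i * B k j)
            + A i j^2 * (∑ k, B k j * B k j) := by
        rw [Finset.mul_sum, Finset.mul_sum, ← Finset.sum_sub_distrib, ← Finset.sum_add_distrib]
        exact Finset.sum_congr rfl fun k _ => by ring
      rw [expand, ← hd, ← hd, ← hd, hii, hjj, hsq]
      linear_combination (-2 : ℝ) * hsq
    intro k
    have h0 := (Finset.sum_eq_zero_iff_of_nonneg (fun k _ => sq_nonneg _)).mp hzero k
      (Finset.mem_univ k)
    have h1 : B k i - A i j * B k j = 0 := by
      have := sq_eq_zero_iff.mp h0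
      exact this
    linarith
  have hmul : ∀ i j k, A i j ≠ 0 → A i k = A i j * A j k := by
    intro i j k hij
    obtain ⟨hii, hjj, hv⟩ := hcs i j hij
    rw [hd i k, hd j k, Finset.mul_sum]
    exact Finset.sum_congr rfl fun m _ => by rw [hv m]; ring
  have hadj_ne : ∀ x y, Gbar.Adj x y → A x y ≠ 0 := by
    intro x y hxy hzero
    have := ((hGbar x y).mp hxy).2
    rw [hzero] at this; simp at this
  have hR : ∀ i j, Gbar.connectedComponentMk i = Gbar.connectedComponentMk j →
      i = j ∨ A i j ≠ 0 := by
    intro i j hij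
    obtain ⟨p⟩ := SimpleGraph.ConnectedComponent.exact hij
    exact walk_rel hadj_ne hmul i j p
  have horth : ∀ j ∈ J, ∀ j' ∈ J, j ≠ j' → A j j' = 0 := by
    intro j hj j' hj' hne
    by_contra hA0
    have hcne : Gbar.connectedComponentMk j ≠ Gbar.connectedComponentMk j' := by
      intro hceq
      obtain ⟨w, hw, huw⟩ := hJrep (Gbar.connectedComponentMk j) (hJmem j hj)
      exact hne ((huw j ⟨hj, rfl⟩).trans (huw j' ⟨hj', hceq.symm⟩).symm)
    have hn0 : 0 ≤ ε * n := by positivity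
    have h6 : ε / 6 * n ≤ ε * n / 2 := by nlinarith
    have hdisj : Disjoint (Gbar.connectedComponentMk j).supp
        (Gbar.connectedComponentMk j').supp := by
      rw [Set.disjoint_left]
      intro a ha ha'
      rw [SimpleGraph.ConnectedComponent.mem_supp_iff] at ha ha'
      exact hcne (ha ▸ ha' ▸ rfl)
    obtain ⟨x, hx, y, hy, hGxy⟩ := hexp (Gbar.connectedComponentMk j).supp
      (Gbar.connectedComponentMk j').supp hdisj
      (le_of_lt (lt_of_le_of_lt h6 (hJmem j hj)))
      (le_of_lt (lt_of_le_of_lt h6 (hJmem j' hj')))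
    rw [SimpleGraph.ConnectedComponent.mem_supp_iff] at hx hy
    have hAxj' : A x j' ≠ 0 := by
      rcases hR x j hx with heq | hxj
      · rw [heq]; exact hA0
      · rw [hmul x j j' hxj]; exact mul_ne_zero hxj hA0
    have hAxy : A x y ≠ 0 := by
      rcases hR y j' hy with heq | hyj'
      · rw [heq]; exact hAxj'
      · rw [hmul x j' y hAxj']
        refine mul_ne_zero hAxj' ?_
        rw [hsymA j' y]; exact hyj'
    have habs : |A x y| = 1 := by
      rcases hent x y with h|h|h
      · rw [h]; norm_num
      · exact absurd h hAxy
      · rw [h]; norm_num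
    have hadjxy : Gbar.Adj x y := (hGbar x y).mpr ⟨hGxy, habs⟩
    have : Gbar.connectedComponentMk x = Gbar.connectedComponentMk y :=
      SimpleGraph.ConnectedComponent.connectedComponentMk_eq_of_adj hadjxy
    exact hcne (hx ▸ hy ▸ this)
  have huniq : ∀ a, ∀ j ∈ J, ∀ j' ∈ J, A a j ≠ 0 → A a j' ≠ 0 → j = j' := by
    intro a j hj j' hj' h1 h2
    by_contra hne
    have hja : A j a ≠ 0 := fun h => h1 (by rw [hsymA a j]; exact h)
    have heq : A j j' = A j a * A a j' := hmul j a j' hja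
    have : A j j' ≠ 0 := heq ▸ mul_ne_zero hja h2
    exact this (horth j hj j' hj' hne)
  have htilde : ∀ a b, compApprox A J a b = ∑ j ∈ J, A a j * A b j := by
    intro a b
    rw [compApprox, Matrix.sum_apply]
    exact Finset.sum_congr rfl fun j _ => rfl
  have hpsd : (compApprox A J).PosSemidef := by
    rw [Matrix.posSemidef_iff_dotProduct_mulVec]
    constructor
    · ext a b
      rw [Matrix.conjTranspose_apply, htilde, htilde, star_trivial]
      exact Finset.sum_congr rfl fun j _ => mul_comm _ _
    · intro x
      have hquad : dotProduct (star x) (compApprox A J *ᵥ x)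
          = ∑ j ∈ J, (∑ i, A i j * x i)^2 := by
        simp only [star_trivial, dotProduct, Matrix.mulVec, htilde]
        have hstep : ∀ j : Fin n, (∑ i, A i j * x i)^2
            = ∑ i, ∑ k, x i * (A i j * A k j) * x k := by
          intro j
          rw [sq, Finset.sum_mul_sum]
          exact Finset.sum_congr rfl fun i _ => Finset.sum_congr rfl fun k _ => by ring
        rw [Finset.sum_congr rfl fun j _ => hstep j, Finset.sum_comm]
        refine Finset.sum_congr rfl fun i _ => ?_
        rw [Finset.mul_sum, Finset.sum_comm]
        refine Finset.sum_congr rfl fun k _ => ?_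
        rw [Finset.sum_mul, Finset.mul_sum]
        exact Finset.sum_congr rfl fun j _ => by ring
      rw [hquad]
      exact Finset.sum_nonneg fun j _ => sq_nonneg _
  have hentT : ∀ a b, compApprox A J a b = -1 ∨ compApprox A J a b = 0 ∨
      compApprox A J a b = 1 := by
    intro a b
    rw [htilde]
    by_cases hz : ∀ j ∈ J, A a j = 0
    · right; left; exact Finset.sum_eq_zero fun j hj => by rw [hz j hj, zero_mul]
    · push_neg at hz
      obtain ⟨j0, hj0, hne⟩ := hz
      rw [Finset.sum_eq_single_of_mem j0 hj0 ?_]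
      · rcases hent a j0 with h|h|h <;> rcases hent b j0 with h'|h'|h' <;>
          rw [h, h'] <;> norm_num
      · intro j hj hjne
        have : A a j = 0 := by
          by_contra h
          exact hjne (huniq a j hj j0 hj0 h hne)
        rw [this, zero_mul]
  set M := A - compApprox A J with hM
  have hMapply : ∀ i k, M i k = A i k - ∑ j ∈ J, A i j * A k j := by
    intro i k; rw [hM, Matrix.sub_apply, htilde]
  have hMentry : ∀ i k, M i k = 0 ∨
      (M i k = A i k ∧ A i k ≠ 0 ∧ (∀ j ∈ J, A i j = 0) ∧ (∀ j ∈ J, A k j = 0)) := by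
    intro i k
    by_cases hi : ∀ j ∈ J, A i j = 0
    · have hsum0 : ∑ j ∈ J, A i j * A k j = 0 :=
        Finset.sum_eq_zero fun j hj => by rw [hi j hj, zero_mul]
      by_cases hk : ∀ j ∈ J, A k j = 0
      · by_cases hik : A i k = 0
        · left; rw [hMapply, hik, hsum0]; ring
        · right; exact ⟨by rw [hMapply, hsum0]; ring, hik, hi, hk⟩
      · left
        push_neg at hk; obtain ⟨j0, hj0, hkj0⟩ := hk
        have hik : A i k = 0 := by
          by_contra h
          have heq : A i j0 = A i k * A k j0 := hmul i k j0 h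
          exact (heq ▸ mul_ne_zero h hkj0) (hi j0 hj0)
        rw [hMapply, hik, hsum0]; ring
    · left
      push_neg at hi; obtain ⟨j0, hj0, hij0⟩ := hi
      have hsum : ∑ j ∈ J, A i j * A k j = A i j0 * A k j0 := by
        refine Finset.sum_eq_single_of_mem j0 hj0 fun j hj hne => ?_
        have : A i j = 0 := by
          by_contra h
          exact hne (huniq i j hj j0 hj0 h hij0)
        rw [this, zero_mul]
      by_cases hkj : A k j0 = 0
      · have hik : A i k = 0 := by
          by_contra h
          have hki : A k i ≠ 0 := fun hh => h (by rw [hsymA i k]; exact hh)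
          have heq : A k j0 = A k i * A i j0 := hmul k i j0 hki
          exact (heq ▸ mul_ne_zero hki hij0) hkj
        rw [hMapply, hik, hsum, hkj]; ring
      · have heq : A i k = A i j0 * A j0 k := hmul i j0 k hij0
        rw [hMapply, hsum, heq, hsymA j0 k]; ring
  have hMent : ∀ i k, M i k = -1 ∨ M i k = 0 ∨ M i k = 1 := by
    intro i k
    rcases hMentry i k with h | ⟨h, _, _, _⟩
    · right; left; exact h
    · rw [h]; exact hent i k
  have hMsym : ∀ i k, M i k = M k i := by
    intro i k
    rw [hMapply, hMapply, hsymA i k]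
    congr 1
    exact Finset.sum_congr rfl fun j _ => mul_comm _ _
  have hrow : ∀ i, (∑ k, (M i k)^2) ≤ ε * n := by
    intro i
    have hn : (0:ℝ) < n := by exact_mod_cast i.pos
    set K : Finset (Fin n) := Finset.univ.filter (fun k => M i k ≠ 0) with hK
    have hsum : ∑ k, (M i k)^2 = (K.card : ℝ) := by
      rw [← Finset.sum_filter_add_sum_filter_not Finset.univ (fun k => M i k ≠ 0)
        (fun k => (M i k)^2)]
      have h2 : ∑ k ∈ Finset.univ.filter (fun k => ¬ M i k ≠ 0), (M i k)^2 = 0 :=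
        Finset.sum_eq_zero fun k hk => by
          rw [not_not.mp (Finset.mem_filter.mp hk).2]; ring
      rw [h2, add_zero, Finset.card_eq_sum_ones K]
      push_cast
      refine Finset.sum_congr rfl fun k hk => ?_
      have hne := (Finset.mem_filter.mp hk).2
      rcases hMent i k with h|h|h
      · rw [h]; norm_num
      · exact absurd h hne
      · rw [h]; norm_num
    rw [hsum]
    have hb : 0 < ε * n / 6 := by positivity
    have key : (K.card : ℝ) ≤ 6 * (ε * n / 6) := by
      refine split_bound G Gbar (ε * n / 6) hb ?_ K ?_ ?_
      · intro X Y hdXY hX hY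
        have e : ε / 6 * n = ε * n / 6 := by ring
        refine hexp (↑X) (↑Y) (Finset.disjoint_coe.mpr hdXY) ?_ ?_
        · rw [Set.ncard_coe_finset, e]; exact hX
        · rw [Set.ncard_coe_finset, e]; exact hY
      · intro x hx y hy hGxy
        have hx' := (Finset.mem_filter.mp hx).2
        have hy' := (Finset.mem_filter.mp hy).2
        rcases hMentry i x with h | ⟨_, hAix, _, _⟩
        · exact absurd h hx'
        rcases hMentry i y with h | ⟨_, hAiy, _, _⟩
        · exact absurd h hy'
        have hxi : A x i ≠ 0 := fun h => hAix (by rw [hsymA i x]; exact h)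
        have heq : A x y = A x i * A i y := hmul x i y hxi
        have hAxy : A x y ≠ 0 := heq ▸ mul_ne_zero hxi hAiy
        refine (hGbar x y).mpr ⟨hGxy, ?_⟩
        rcases hent x y with h|h|h
        · rw [h]; norm_num
        · exact absurd h hAxy
        · rw [h]; norm_num
      · intro x hx
        have hx' := (Finset.mem_filter.mp hx).2
        rcases hMentry i x with h | ⟨_, hAix, _, hxJ⟩
        · exact absurd h hx'
        by_contra hbig
        push_neg at hbig
        have hbig' : ε * n / 2 < ((Gbar.connectedComponentMk x).supp.ncard : ℝ) := by
          have e : (3:ℝ) * (ε * n / 6) = ε * n / 2 := by ring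
          linarith
        obtain ⟨j, ⟨hjJ, hjc⟩, _⟩ := hJrep _ hbig'
        rcases hR x j hjc.symm with heq | hxj
        · have hxx := (hcs i x hAix).2.1
          have h0 := hxJ j hjJ
          rw [← heq] at h0
          rw [hxx] at h0
          norm_num at h0
        · exact hxj (hxJ j hjJ)
    linarith
  have hεn : 0 ≤ ε * n := by positivity
  exact ⟨hpsd, hentT, specNorm_le_of_rows M (ε*n) hεn hMent hMsym hrow⟩
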